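/- Let H be a complex Hilbert space, E a set, and k : E → H a map whose image {k(q) : q ∈ E} has dense linear span in H. Let f ∈ H and let (p_n)_{n≥1} be a sequence in E satisfying the greedy optimality condition: for every n ≥ 0 and every q ∈ E, ‖f − P_{n+1} f‖ ≤ ‖f − Q_{n,q} f‖, where P_n denotes the orthogonal projection onto span{k(p_1), …, k(p_n)} (P_0 = 0) and Q_{n,q} denotes the orthogonal projection onto span{k(p_1), …, k(p_n), k(q)}. Then ‖f − P_n f‖ → 0 as n → ∞. -/

import Mathlib

open Metric Filter Submodule
open scoped ComplexInnerProductSpace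

/-- **Convergence of AMUCD / the pre-orthogonal greedy algorithm (Theorem 2.1).**
Let `H` be a complex Hilbert space, `k : E → H` with dense linear span of its range, `f ∈ H`,
and `(p n)` a sequence in `E` satisfying the greedy optimality condition: for every `n` and
every candidate `q ∈ E`, the distance from `f` to `span {k (p 0), …, k (p n)}` is at most the
distance from `f` to `span {k (p 0), …, k (p (n-1)), k q}`. (The distance from `f` to the span
of the first `n` elements equals `‖f − Pₙ f‖` for the orthogonal projection `Pₙ`, with the
empty span `{0}` giving `P₀ = 0`.) Then `‖f − Pₙ f‖ → 0`. -/
theorem stmt6 {H : Type*} [NormedAddCommGroup H] [InnerProductSpace ℂ H] [CompleteSpace H]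
    {E : Type*} (k : E → H)
    (hdense : Dense (Submodule.span ℂ (Set.range k) : Set H))
    (f : H) (p : ℕ → E)
    (hgreedy : ∀ (n : ℕ) (q : E),
      Metric.infDist f
          (Submodule.span ℂ ((fun j => k (p j)) '' {j : ℕ | j < n + 1}) : Set H)
        ≤ Metric.infDist f
          (Submodule.span ℂ (insert (k q) ((fun j => k (p j)) '' {j : ℕ | j < n})) : Set H)) :
    Filter.Tendsto
      (fun n : ℕ => Metric.infDist f
        (Submodule.span ℂ ((fun j => k (p j)) '' {j : ℕ | j < n}) : Set H))
      Filter.atTop (nhds 0) := by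
  set S : ℕ → Set H := fun n => (fun j => k (p j)) '' {j : ℕ | j < n} with hSdef
  set M : ℕ → Submodule ℂ H := fun n => Submodule.span ℂ (S n) with hMdef
  haveI : ∀ n, FiniteDimensional ℂ (M n) := fun n =>
    FiniteDimensional.span_of_finite ℂ ((Set.finite_Iio n).image _)
  have hmono : Monotone M := fun a b hab =>
    Submodule.span_mono (Set.image_mono fun j hj => lt_of_lt_of_le hj hab)
  set N : Submodule ℂ H := (⨆ n, M n).topologicalClosure with hNdef
  haveI : CompleteSpace N := (Submodule.isClosed_topologicalClosure _).completeSpace_coe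
  set g : H := (orthogonalProjection N f : H) with hgdef
  have hproj : Tendsto (fun n => (orthogonalProjection (M n) f : H)) atTop (nhds g) :=
    starProjection_tendsto_closure_iSup M hmono f
  -- infDist equals norm of the residual
  have hd : ∀ (K : Submodule ℂ H) [HasOrthogonalProjection K],
      Metric.infDist f (K : Set H) = ‖f - orthogonalProjection K f‖ := by
    intro K _
    rw [Metric.infDist_eq_iInf]
    refine Eq.trans ?_ (starProjection_minimal (U := K) f).symm
    simp_rw [dist_eq_norm]
    rfl
  set d : ℕ → ℝ := fun n => Metric.infDist f (M n : Set H) with hddef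
  have hdl : Tendsto d atTop (nhds ‖f - g‖) := by
    have : Tendsto (fun n => ‖f - (orthogonalProjection (M n) f : H)‖) atTop (nhds ‖f - g‖) :=
      (tendsto_const_nhds.sub hproj).norm
    exact this.congr fun n => (hd (M n)).symm
  set r : H := f - g with hrdef
  -- the limit is below each term
  have hL_le : ∀ m, ‖f - g‖ ≤ d m := by
    intro m
    refine le_of_tendsto hdl (Filter.eventually_atTop.2 ⟨m, fun n hn => ?_⟩)
    exact Metric.infDist_le_infDist_of_subset (hmono hn) ⟨0, (M m).zero_mem⟩
  -- the residual is orthogonal to every k q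
  have hinner : ∀ q : E, (inner ℂ (k q) (r) : ℂ) = 0 := by
    intro q
    by_contra hq
    set v : H := k q with hvdef
    have hv0 : v ≠ 0 := by intro h; apply hq; rw [h, inner_zero_left]
    set c : ℂ := (inner ℂ (v) (r) : ℂ) / ((‖v‖ ^ 2 : ℝ) : ℂ) with hcdef
    -- c • v is the orthogonal projection of r onto ℂ ∙ v
    have hcv : c • v = (orthogonalProjection (ℂ ∙ v) r : H) :=
      (starProjection_singleton ℂ r).symm
    have hpyth : ‖r‖ ^ 2 = ‖r - c • v‖ ^ 2 + ‖c • v‖ ^ 2 := by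
      have horth : (inner ℂ (r - c • v) (c • v) : ℂ) = 0 := by
        rw [hcv]
        exact (Submodule.mem_orthogonal' _ _).1
          (sub_starProjection_mem_orthogonal (K := ℂ ∙ v) r) _ (Submodule.coe_mem _)
      have := norm_add_sq_eq_norm_sq_add_norm_sq_of_inner_eq_zero (r - c • v) (c • v) horth
      rw [sub_add_cancel] at this
      simpa [sq] using this
    have hcv0 : c • v ≠ 0 := by
      rw [smul_ne_zero_iff]
      refine ⟨?_, hv0⟩
      rw [hcdef]
      intro h
      rcases div_eq_zero_iff.1 h with h1 | h1
      · exact hq h1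
      · exact absurd h1 (by simpa using pow_ne_zero 2 (norm_ne_zero_iff.2 hv0))
    have hlt : ‖r - c • v‖ < ‖r‖ := by
      nlinarith [norm_pos_iff.2 hcv0, norm_nonneg (r - c • v), norm_nonneg r,
        sq_nonneg ‖c • v‖]
    -- greedy condition at each n gives ‖r‖ ≤ ‖f - Pₙ f - c • v‖
    have hkey : ∀ n : ℕ, ‖r‖ ≤ ‖f - (orthogonalProjection (M n) f : H) - c • v‖ := by
      intro n
      have h1 : ‖r‖ ≤ Metric.infDist f
          (Submodule.span ℂ (insert (k q) (S n)) : Set H) :=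
        le_trans (hL_le (n + 1)) (hgreedy n q)
      have hmem : (orthogonalProjection (M n) f : H) + c • v ∈
          Submodule.span ℂ (insert (k q) (S n)) := by
        refine Submodule.add_mem _ ?_ ?_
        · exact Submodule.span_mono (Set.subset_insert _ _) (Submodule.coe_mem _)
        · exact Submodule.smul_mem _ _ (Submodule.subset_span (Set.mem_insert _ _))
      have h2 := Metric.infDist_le_dist_of_mem (x := f) hmem
      rw [dist_eq_norm] at h2
      calc ‖r‖ ≤ _ := h1
        _ ≤ ‖f - ((orthogonalProjection (M n) f : H) + c • v)‖ := h2
        _ = ‖f - (orthogonalProjection (M n) f : H) - c • v‖ := by rw [sub_add_eq_sub_sub]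
    have hlim : Tendsto (fun n => ‖f - (orthogonalProjection (M n) f : H) - c • v‖)
        atTop (nhds ‖r - c • v‖) :=
      ((tendsto_const_nhds.sub hproj).sub tendsto_const_nhds).norm
    have : ‖r‖ ≤ ‖r - c • v‖ :=
      ge_of_tendsto hlim (Filter.Eventually.of_forall hkey)
    exact absurd this (not_le.2 hlt)
  -- density gives r = 0
  have hr0 : r = 0 := by
    refine Dense.eq_zero_of_inner_left ℂ hdense fun w hw => ?_
    refine Submodule.span_induction ?_ ?_ ?_ ?_ hw
    · rintro x ⟨q, rfl⟩
      rw [← inner_conj_symm, hinner q, map_zero]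
    · simp
    · intro x y _ _ hx hy; rw [inner_add_right, hx, hy, add_zero]
    · intro a x _ hx; rw [inner_smul_right, hx, mul_zero]
  have : ‖f - g‖ = 0 := by rw [← hrdef, hr0, norm_zero]
  rw [← this]
  exact hdl
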